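/- Let M = WH ∈ ℝ^{m×n} where W ∈ ℝ^{m×r} has rank r, H = [I_r, H'] with H' ≥ 0 and each column of H' has entries summing to at most 1. Let f : ℝ^m → ℝ≥0 be strongly convex with parameter μ > 0, have L-Lipschitz gradient, and satisfy f(0)=0 with 0 the global minimizer. Then the recursive algorithm that, at each of r steps, selects the column of the current residual maximizing f and projects the residual onto the orthogonal complement of the selected column, recovers a set J of r indices such that M(:,J) = W up to a permutation of columns. -/

import Mathlib

open RealInnerProductSpace

lemma aux_jensen {E : Type*} [AddCommGroup E] [Module ℝ E]
    {f : E → ℝ} (hconv : ConvexOn ℝ Set.univ f) (hf0 : f 0 = 0)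
    {ι : Type*} (t : Finset ι) (θ : ι → ℝ) (y : ι → E)
    (h0 : ∀ a ∈ t, 0 ≤ θ a) (h1 : ∑ a ∈ t, θ a ≤ 1) :
    f (∑ a ∈ t, θ a • y a) ≤ ∑ a ∈ t, θ a * f (y a) := by
  have hs0 : 0 ≤ ∑ a ∈ t, θ a := Finset.sum_nonneg h0
  rcases eq_or_lt_of_le hs0 with h | h
  · have hz : ∀ a ∈ t, θ a = 0 := (Finset.sum_eq_zero_iff_of_nonneg h0).1 h.symm
    have e1 : ∑ a ∈ t, θ a • y a = 0 := Finset.sum_eq_zero fun a ha => by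
      rw [hz a ha, zero_smul]
    have e2 : ∑ a ∈ t, θ a * f (y a) = 0 := Finset.sum_eq_zero fun a ha => by
      rw [hz a ha, zero_mul]
    rw [e1, e2, hf0]
  · set s := ∑ a ∈ t, θ a with hs
    have hsum' : ∑ a ∈ t, θ a / s = 1 := by
      rw [← Finset.sum_div, ← hs, div_self h.ne']
    have key : f (∑ a ∈ t, (θ a / s) • y a) ≤ ∑ a ∈ t, (θ a / s) • f (y a) :=
      hconv.map_sum_le (fun a ha => div_nonneg (h0 a ha) h.le) hsum' (fun _ _ => Set.mem_univ _)
    have e1 : (∑ a ∈ t, θ a • y a) = s • (∑ a ∈ t, (θ a / s) • y a) + (1 - s) • (0 : E) := by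
      rw [smul_zero, add_zero, Finset.smul_sum]
      refine Finset.sum_congr rfl fun a _ => ?_
      rw [smul_smul]
      congr 1
      field_simp
    have hconv2 := hconv.2 (Set.mem_univ (∑ a ∈ t, (θ a / s) • y a)) (Set.mem_univ (0 : E))
      h.le (by linarith : (0:ℝ) ≤ 1 - s) (by ring : s + (1 - s) = 1)
    simp only [smul_eq_mul] at hconv2 key
    rw [e1]
    calc f (s • (∑ a ∈ t, (θ a / s) • y a) + (1 - s) • (0 : E))
        ≤ s * f (∑ a ∈ t, (θ a / s) • y a) + (1 - s) * f 0 := hconv2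
      _ = s * f (∑ a ∈ t, (θ a / s) • y a) := by rw [hf0, mul_zero, add_zero]
      _ ≤ s * ∑ a ∈ t, (θ a / s) * f (y a) := mul_le_mul_of_nonneg_left key h.le
      _ = ∑ a ∈ t, θ a * f (y a) := by
          rw [Finset.mul_sum]
          refine Finset.sum_congr rfl fun a _ => ?_
          rw [← mul_assoc]
          congr 1
          field_simp

set_option maxHeartbeats 1000000 in
theorem stmt_2 (m r n' : ℕ) (hr : 0 < r) (μ L : ℝ) (hμ : 0 < μ)
    (w : Fin r → EuclideanSpace ℝ (Fin m))
    (hW : LinearIndependent ℝ w)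
    (H : Matrix (Fin r) (Fin (r + n')) ℝ)
    (hHI : ∀ j : Fin r, ∀ a : Fin r, H a (Fin.castAdd n' j) = if a = j then 1 else 0)
    (hH0 : ∀ a : Fin r, ∀ j : Fin n', 0 ≤ H a (Fin.natAdd r j))
    (hH1 : ∀ j : Fin n', ∑ a, H a (Fin.natAdd r j) ≤ 1)
    (Mc : Fin (r + n') → EuclideanSpace ℝ (Fin m))
    (hM : ∀ j, Mc j = ∑ a, H a j • w a)
    (f : EuclideanSpace ℝ (Fin m) → ℝ)
    (f' : EuclideanSpace ℝ (Fin m) → EuclideanSpace ℝ (Fin m))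
    (hf0 : f 0 = 0) (hnonneg : ∀ y, 0 ≤ f y)
    (hgrad : ∀ x, HasGradientAt f (f' x) x)
    (hlip : ∀ x y, ‖f' x - f' y‖ ≤ L * ‖x - y‖)
    (hsc : ∀ x y : EuclideanSpace ℝ (Fin m), ∀ δ : ℝ, 0 ≤ δ → δ ≤ 1 →
      f (δ • x + (1 - δ) • y) ≤ δ * f x + (1 - δ) * f y - μ / 2 * (δ * (1 - δ)) * ‖x - y‖ ^ 2)
    (R : ℕ → Fin (r + n') → EuclideanSpace ℝ (Fin m))
    (J : Fin r → Fin (r + n'))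
    (hR0 : R 0 = Mc)
    (hmax : ∀ j : Fin r, ∀ b, f (R (j : ℕ) b) ≤ f (R (j : ℕ) (J j)))
    (hupd : ∀ j : Fin r, ∀ b, R ((j : ℕ) + 1) b =
      R (j : ℕ) b - ((inner ℝ (R (j : ℕ) (J j)) (R (j : ℕ) b) : ℝ) / ‖R (j : ℕ) (J j)‖ ^ 2) •
        R (j : ℕ) (J j)) :
    ∃ σ : Equiv.Perm (Fin r), ∀ j : Fin r, Mc (J j) = w (σ j) := by
  classical
  -- the residual columns of the "identity part"
  set v : ℕ → Fin r → EuclideanSpace ℝ (Fin m) := fun j c => R j (Fin.castAdd n' c) with hv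
  -- convexity of f
  have hconv : ConvexOn ℝ Set.univ f := by
    refine ⟨convex_univ, fun x _ y _ a b ha hb hab => ?_⟩
    have h := hsc x y a ha (by linarith)
    have hb' : b = 1 - a := by linarith
    have hnn : 0 ≤ μ / 2 * (a * (1 - a)) * ‖x - y‖ ^ 2 :=
      mul_nonneg (mul_nonneg (by linarith) (mul_nonneg ha (by linarith))) (sq_nonneg _)
    rw [hb']
    simp only [smul_eq_mul]
    linarith
  -- positivity of f away from 0
  have fpos : ∀ x : EuclideanSpace ℝ (Fin m), x ≠ 0 → 0 < f x := by
    intro x hx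
    have h := hsc x 0 (1/2) (by norm_num) (by norm_num)
    have h0 : (0:ℝ) ≤ f ((1/2 : ℝ) • x + (1 - 1/2 : ℝ) • (0 : EuclideanSpace ℝ (Fin m))) :=
      hnonneg _
    have hn : 0 < ‖x‖ := norm_pos_iff.mpr hx
    rw [sub_zero] at h
    nlinarith [mul_pos hμ (mul_pos hn hn), sq_nonneg ‖x‖]
  -- initial residual unit columns
  have hv0 : ∀ c, v 0 c = w c := by
    intro c
    show R 0 (Fin.castAdd n' c) = w c
    rw [hR0, hM]
    rw [Finset.sum_congr rfl fun a _ => by rw [hHI c a]]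
    simp
  -- linearity of residual in the columns
  have L1 : ∀ j, j ≤ r → ∀ b, R j b = ∑ c, H c b • v j c := by
    intro j
    induction j with
    | zero =>
      intro _ b
      rw [hR0, hM b]
      exact Finset.sum_congr rfl fun c _ => by rw [hv0 c]
    | succ j ih =>
      intro hj1 b
      have hjr : j < r := hj1
      set jf : Fin r := ⟨j, hjr⟩ with hjf
      set u : EuclideanSpace ℝ (Fin m) := R j (J jf) with hu
      have hupd' : ∀ b', R (j+1) b' = R j b' -
          ((inner ℝ u (R j b') : ℝ) / ‖u‖ ^ 2) • u := fun b' => hupd jf b'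
      have hb := ih hjr.le b
      have hinner : (inner ℝ u (R j b) : ℝ) = ∑ c, H c b * (inner ℝ u (v j c) : ℝ) := by
        rw [hb, inner_sum]
        exact Finset.sum_congr rfl fun c _ => real_inner_smul_right _ _ _
      have hvs : ∀ c, v (j+1) c = v j c - ((inner ℝ u (v j c) : ℝ) / ‖u‖ ^ 2) • u :=
        fun c => hupd' (Fin.castAdd n' c)
      have e : ∀ c : Fin r, H c b • v (j+1) c = H c b • v j c -
          (H c b * (inner ℝ u (v j c) : ℝ) / ‖u‖ ^ 2) • u := by
        intro c
        rw [hvs c, smul_sub, smul_smul, mul_div_assoc]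
      have rhs : ∑ c, H c b • v (j+1) c = ∑ c, H c b • v j c -
          ((∑ c, H c b * (inner ℝ u (v j c) : ℝ)) / ‖u‖ ^ 2) • u := by
        rw [Finset.sum_congr rfl fun c _ => e c]
        rw [Finset.sum_sub_distrib, ← Finset.sum_smul, ← Finset.sum_div]
      rw [hupd' b, hinner, hb, rhs]
  -- main induction
  have main : ∀ j, j ≤ r → ∃ A : ℕ → Fin r,
      (∀ i (hi : i < r), i < j → Mc (J ⟨i, hi⟩) = w (A i)) ∧
      (∀ i i', i < j → i' < j → A i = A i' → i = i') ∧
      (∀ c, v j c - w c ∈ Submodule.span ℝ (w '' ↑((Finset.range j).image A))) ∧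
      (∀ c, c ∈ (Finset.range j).image A → v j c = 0) := by
    intro j
    induction j with
    | zero =>
      intro _
      refine ⟨fun _ => ⟨0, hr⟩, ?_, ?_, ?_, ?_⟩
      · intro i hi h
        exact absurd h (Nat.not_lt_zero i)
      · intro i i' h _ _
        exact absurd h (Nat.not_lt_zero i)
      · intro c
        rw [hv0 c, sub_self]
        exact Submodule.zero_mem _
      · intro c hc
        simp at hc
    | succ j ih =>
      intro hj1
      have hjr : j < r := hj1
      obtain ⟨A, C1, C2, C3, C4⟩ := ih hjr.le
      set jf : Fin r := ⟨j, hjr⟩ with hjf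
      set sel : Finset (Fin r) := (Finset.range j).image A with hseldef
      -- weights are in the simplex
      have hθ : (∀ c, 0 ≤ H c (J jf)) ∧ (∑ c, H c (J jf)) ≤ 1 := by
        refine Fin.addCases (motive := fun k => (∀ c, 0 ≤ H c k) ∧ (∑ c, H c k) ≤ 1)
          (fun c0 => ⟨fun c => ?_, ?_⟩) (fun c0 => ⟨fun c => hH0 c c0, hH1 c0⟩) (J jf)
        · rw [hHI c0 c]
          split <;> norm_num
        · rw [Finset.sum_congr rfl fun c _ => hHI c0 c]
          simp
      obtain ⟨θnn, θle⟩ := hθ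
      have hmax' : ∀ b, f (R j b) ≤ f (R j (J jf)) := fun b => hmax jf b
      have hupd' : ∀ b', R (j+1) b' = R j b' -
          ((inner ℝ (R j (J jf)) (R j b') : ℝ) / ‖R j (J jf)‖ ^ 2) • R j (J jf) :=
        fun b' => hupd jf b'
      have hvupd2 : ∀ c, v (j+1) c = v j c -
          ((inner ℝ (R j (J jf)) (v j c) : ℝ) / ‖R j (J jf)‖ ^ 2) • R j (J jf) :=
        fun c => hupd' (Fin.castAdd n' c)
      have hx' : R j (J jf) = ∑ c, H c (J jf) • v j c := L1 j hjr.le (J jf)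
      -- an unselected column exists
      have hselcard : sel.card < r := by
        calc sel.card ≤ (Finset.range j).card := Finset.card_image_le
          _ = j := Finset.card_range j
          _ < r := hjr
      obtain ⟨c0, hc0⟩ : ∃ c0, c0 ∉ sel := by
        by_contra hcon
        push_neg at hcon
        have : sel = Finset.univ := Finset.eq_univ_iff_forall.2 hcon
        rw [this, Finset.card_univ, Fintype.card_fin] at hselcard
        exact lt_irrefl r hselcard
      -- unselected residuals are nonzero
      have hnz : ∀ c, c ∉ sel → v j c ≠ 0 := by
        intro c hc hveq
        have h3 := C3 c
        rw [hveq, zero_sub, neg_mem_iff] at h3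
        exact hW.notMem_span_image (by simpa using hc) h3
      -- unselected residuals are pairwise distinct
      have hdist : ∀ c c', c ∉ sel → c' ∉ sel → v j c = v j c' → c = c' := by
        intro c c' hc hc' hvv
        by_contra hne
        have hmem := Submodule.sub_mem _ (C3 c') (C3 c)
        rw [← hvv] at hmem
        rw [show v j c - w c' - (v j c - w c) = w c - w c' from by abel] at hmem
        have hwc : w c ∈ Submodule.span ℝ (w '' (insert c' (↑sel : Set (Fin r)))) := by
          have h1 : w c - w c' ∈ Submodule.span ℝ (w '' (insert c' (↑sel : Set (Fin r)))) :=
            Submodule.span_mono (Set.image_mono (f := w) (Set.subset_insert c' _)) hmem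
          have h2 : w c' ∈ Submodule.span ℝ (w '' (insert c' (↑sel : Set (Fin r)))) :=
            Submodule.subset_span ⟨c', Set.mem_insert c' _, rfl⟩
          have h3 := Submodule.add_mem _ h1 h2
          rwa [sub_add_cancel] at h3
        refine hW.notMem_span_image ?_ hwc
        intro hmem'
        rcases Set.mem_insert_iff.1 hmem' with h | h
        exacts [hne h, hc (Finset.mem_coe.1 h)]
      -- positivity of the selected value
      have hfx : 0 < f (R j (J jf)) :=
        lt_of_lt_of_le (fpos _ (hnz c0 hc0)) (hmax' (Fin.castAdd n' c0))
      -- Jensen upper bound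
      have jensenx : f (R j (J jf)) ≤ ∑ c, H c (J jf) * f (v j c) := by
        rw [hx']
        exact aux_jensen hconv hf0 Finset.univ _ _ (fun c _ => θnn c) θle
      have hub : ∀ c, f (v j c) ≤ f (R j (J jf)) := fun c => hmax' (Fin.castAdd n' c)
      -- total weight is 1
      have hsum1 : ∑ c, H c (J jf) = 1 := by
        by_contra hne
        have hlt : ∑ c, H c (J jf) < 1 := lt_of_le_of_ne θle hne
        have h2 : ∑ c, H c (J jf) * f (v j c) ≤ (∑ c, H c (J jf)) * f (R j (J jf)) := by
          rw [Finset.sum_mul]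
          exact Finset.sum_le_sum fun c _ => mul_le_mul_of_nonneg_left (hub c) (θnn c)
        nlinarith [jensenx]
      -- no weight on already selected columns
      have hsel0 : ∀ c, c ∈ sel → H c (J jf) = 0 := by
        intro c hcsel
        by_contra hne
        have hpos : 0 < H c (J jf) := lt_of_le_of_ne (θnn c) (Ne.symm hne)
        have hfv0 : f (v j c) = 0 := by rw [C4 c hcsel, hf0]
        have herase : ∑ a ∈ Finset.univ.erase c, H a (J jf) = 1 - H c (J jf) := by
          rw [← hsum1, ← Finset.add_sum_erase _ _ (Finset.mem_univ c)]
          ring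
        have h2 : ∑ a, H a (J jf) * f (v j a) ≤ (1 - H c (J jf)) * f (R j (J jf)) := by
          rw [← Finset.add_sum_erase _ (fun a => H a (J jf) * f (v j a)) (Finset.mem_univ c)]
          rw [hfv0, mul_zero, zero_add]
          calc ∑ a ∈ Finset.univ.erase c, H a (J jf) * f (v j a)
              ≤ ∑ a ∈ Finset.univ.erase c, H a (J jf) * f (R j (J jf)) :=
                Finset.sum_le_sum fun a _ => mul_le_mul_of_nonneg_left (hub a) (θnn a)
            _ = (1 - H c (J jf)) * f (R j (J jf)) := by rw [← Finset.sum_mul, herase]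
        nlinarith [jensenx]
      -- every positively weighted column equals the selected point
      have hpt : ∀ a, 0 < H a (J jf) → R j (J jf) = v j a := by
        intro a ha
        have hθa1 : H a (J jf) ≤ 1 := by
          rw [← hsum1]
          exact Finset.single_le_sum (fun c _ => θnn c) (Finset.mem_univ a)
        have herase : ∑ c ∈ Finset.univ.erase a, H c (J jf) = 1 - H a (J jf) := by
          rw [← hsum1, ← Finset.add_sum_erase _ _ (Finset.mem_univ a)]
          ring
        rcases eq_or_lt_of_le hθa1 with h1 | h1
        · have hothers : ∀ c ∈ Finset.univ.erase a, H c (J jf) = 0 := by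
            refine (Finset.sum_eq_zero_iff_of_nonneg fun c _ => θnn c).1 ?_
            rw [herase, h1, sub_self]
          rw [hx', ← Finset.add_sum_erase _ _ (Finset.mem_univ a), h1, one_smul,
            Finset.sum_eq_zero fun c hc => by rw [hothers c hc, zero_smul], add_zero]
        · have h1' : 0 < 1 - H a (J jf) := by linarith
          set z := (1 - H a (J jf))⁻¹ • ∑ c ∈ Finset.univ.erase a, H c (J jf) • v j c with hz
          have hxz : R j (J jf) = H a (J jf) • v j a + (1 - H a (J jf)) • z := by
            rw [hz, smul_inv_smul₀ h1'.ne', hx', ← Finset.add_sum_erase _ _ (Finset.mem_univ a)]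
          have hzr : z = ∑ c ∈ Finset.univ.erase a,
              ((1 - H a (J jf))⁻¹ * H c (J jf)) • v j c := by
            rw [hz, Finset.smul_sum]
            exact Finset.sum_congr rfl fun c _ => smul_smul _ _ _
          have hfz : f z ≤ f (R j (J jf)) := by
            rw [hzr]
            have hj2 := aux_jensen hconv hf0 (Finset.univ.erase a)
              (fun c => (1 - H a (J jf))⁻¹ * H c (J jf)) (fun c => v j c)
              (fun c _ => mul_nonneg (inv_nonneg.2 h1'.le) (θnn c))
              (by rw [← Finset.mul_sum, herase, inv_mul_cancel₀ h1'.ne'])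
            refine hj2.trans ?_
            calc ∑ c ∈ Finset.univ.erase a, ((1 - H a (J jf))⁻¹ * H c (J jf)) * f (v j c)
                ≤ ∑ c ∈ Finset.univ.erase a,
                    ((1 - H a (J jf))⁻¹ * H c (J jf)) * f (R j (J jf)) :=
                  Finset.sum_le_sum fun c _ => mul_le_mul_of_nonneg_left (hub c)
                    (mul_nonneg (inv_nonneg.2 h1'.le) (θnn c))
              _ = f (R j (J jf)) := by
                  rw [← Finset.sum_mul, ← Finset.mul_sum, herase, inv_mul_cancel₀ h1'.ne',
                    one_mul]
          have hscx := hsc (v j a) z (H a (J jf)) (θnn a) hθa1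
          rw [← hxz] at hscx
          have e1 : H a (J jf) * f (v j a) ≤ H a (J jf) * f (R j (J jf)) :=
            mul_le_mul_of_nonneg_left (hub a) (θnn a)
          have e2 : (1 - H a (J jf)) * f z ≤ (1 - H a (J jf)) * f (R j (J jf)) :=
            mul_le_mul_of_nonneg_left hfz h1'.le
          have e3 : 0 < μ / 2 * (H a (J jf) * (1 - H a (J jf))) :=
            mul_pos (by linarith) (mul_pos ha h1')
          have hnrm : ‖v j a - z‖ ^ 2 ≤ 0 := by nlinarith [sq_nonneg ‖v j a - z‖]
          have hvz : v j a = z := by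
            have hn0 : ‖v j a - z‖ ^ 2 = 0 := le_antisymm hnrm (sq_nonneg _)
            have := (pow_eq_zero_iff (two_ne_zero)).1 hn0
            rwa [norm_eq_zero, sub_eq_zero] at this
          rw [hxz, ← hvz, ← add_smul,
            show H a (J jf) + (1 - H a (J jf)) = 1 from by ring, one_smul]
      -- the unique supported index
      obtain ⟨astar, hastar⟩ : ∃ a, 0 < H a (J jf) := by
        by_contra hcon
        push_neg at hcon
        have h0 : ∑ c, H c (J jf) = 0 :=
          Finset.sum_eq_zero fun c _ => le_antisymm (hcon c) (θnn c)
        rw [hsum1] at h0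
        norm_num at h0
      have hastar_unsel : astar ∉ sel := fun h => by
        rw [hsel0 astar h] at hastar
        exact lt_irrefl 0 hastar
      have huniq : ∀ a, 0 < H a (J jf) → a = astar := by
        intro a ha
        have haun : a ∉ sel := fun h => by
          rw [hsel0 a h] at ha
          exact lt_irrefl 0 ha
        exact hdist a astar haun hastar_unsel ((hpt a ha).symm.trans (hpt astar hastar))
      have hzero : ∀ a, a ≠ astar → H a (J jf) = 0 := by
        intro a hne
        rcases lt_or_eq_of_le (θnn a) with h | h
        · exact absurd (huniq a h) hne
        · exact h.symm
      have hstar1 : H astar (J jf) = 1 := by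
        rw [← hsum1]
        exact (Finset.sum_eq_single astar (fun b _ hb => hzero b hb)
          (fun h => absurd (Finset.mem_univ astar) h)).symm
      have hMcJ : Mc (J jf) = w astar := by
        rw [hM (J jf), Finset.sum_eq_single astar (fun b _ hb => by rw [hzero b hb, zero_smul])
          (fun h => absurd (Finset.mem_univ astar) h), hstar1, one_smul]
      have hxa : R j (J jf) = v j astar := hpt astar hastar
      -- the new selection function
      set A' : ℕ → Fin r := fun i => if i = j then astar else A i with hA'
      have hAeq : ∀ i, i < j → A' i = A i := fun i hi => if_neg (Nat.ne_of_lt hi)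
      have himg : (Finset.range (j+1)).image A' = insert astar sel := by
        rw [Finset.range_add_one, Finset.image_insert]
        congr 1
        · simp [hA']
        · exact Finset.image_congr fun i hi => hAeq i (Finset.mem_range.1 hi)
      refine ⟨A', ?_, ?_, ?_, ?_⟩
      · -- recovered columns
        intro i hi hij
        rcases Nat.lt_succ_iff_lt_or_eq.1 hij with h | h
        · rw [hAeq i h]
          exact C1 i hi h
        · subst h
          rw [show A' i = astar from if_pos rfl]
          exact hMcJ
      · -- injectivity
        intro i i' hi hi' heq
        rcases Nat.lt_succ_iff_lt_or_eq.1 hi with h | h <;>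
          rcases Nat.lt_succ_iff_lt_or_eq.1 hi' with h' | h'
        · exact C2 i i' h h' (by rwa [hAeq i h, hAeq i' h'] at heq)
        · exfalso
          apply hastar_unsel
          refine Finset.mem_image.2 ⟨i, Finset.mem_range.2 h, ?_⟩
          rw [← hAeq i h, heq, h', show A' j = astar from if_pos rfl]
        · exfalso
          apply hastar_unsel
          refine Finset.mem_image.2 ⟨i', Finset.mem_range.2 h', ?_⟩
          rw [← hAeq i' h', ← heq, h, show A' j = astar from if_pos rfl]
        · rw [h, h']
      · -- span invariant
        intro c
        rw [himg, Finset.coe_insert]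
        have hspan_x : R j (J jf) ∈
            Submodule.span ℝ (w '' insert astar (↑sel : Set (Fin r))) := by
          rw [hxa]
          have h1 : v j astar - w astar ∈
              Submodule.span ℝ (w '' insert astar (↑sel : Set (Fin r))) :=
            Submodule.span_mono (Set.image_mono (f := w) (Set.subset_insert _ _)) (C3 astar)
          have h2 : w astar ∈ Submodule.span ℝ (w '' insert astar (↑sel : Set (Fin r))) :=
            Submodule.subset_span ⟨astar, Set.mem_insert _ _, rfl⟩
          have h3 := Submodule.add_mem _ h1 h2
          rwa [sub_add_cancel] at h3
        rw [hvupd2 c, sub_right_comm]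
        exact Submodule.sub_mem _
          (Submodule.span_mono (Set.image_mono (f := w) (Set.subset_insert _ _)) (C3 c))
          (Submodule.smul_mem _ _ hspan_x)
      · -- selected residuals vanish
        intro c hc
        rw [himg, Finset.mem_insert] at hc
        rcases hc with h | h
        · subst h
          have hRne : R j (J jf) ≠ 0 := by
            rw [hxa]
            exact hnz c hastar_unsel
          rw [hvupd2 c, ← hxa, real_inner_self_eq_norm_sq,
            div_self (pow_ne_zero 2 (norm_ne_zero_iff.2 hRne)), one_smul, sub_self]
        · rw [hvupd2 c, C4 c h, inner_zero_right, zero_div, zero_smul, sub_zero]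
  obtain ⟨A, C1, C2, _, _⟩ := main r le_rfl
  have hginj : Function.Injective (fun i : Fin r => A i.val) := by
    intro i i' h
    exact Fin.ext (C2 i.val i'.val i.isLt i'.isLt h)
  refine ⟨Equiv.ofBijective _ (Finite.injective_iff_bijective.1 hginj), fun i => ?_⟩
  exact C1 i.val i.isLt i.isLt
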